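/- Let α ∈ ℝ, h > 0, t_n ∈ ℝ, k ≥ 1 an integer, and let c̃(t) = Σ_{j=0}^{k−1} (γ_j / j!) ((t − t_n)/h)^j be a polynomial with coefficients γ_0, …, γ_{k−1} ∈ ℝ. If y : [t_n, t_n + h] → ℝ is differentiable and satisfies y'(t) = α·y(t) + c̃(t) on [t_n, t_n + h], then y(t_n + h) = e^{α h} y(t_n) + h Σ_{j=0}^{k−1} γ_j φ_{j+1}(α h); that is, the exponential Adams–Bashforth one-step update is exact when the nonlinear remainder is the polynomial c̃. -/

import Mathlib

open Finset Set

/-- `φ_j(z) = Σ_{n=0}^∞ z^n / (n+j)!`. -/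
noncomputable def phi (j : ℕ) (z : ℝ) : ℝ := ∑' n : ℕ, z ^ n / (Nat.factorial (n + j))

lemma summable_phi (j : ℕ) (z : ℝ) :
    Summable (fun n : ℕ => z ^ n / (Nat.factorial (n + j))) := by
  apply Summable.of_norm_bounded (Real.summable_pow_div_factorial |z|)
  intro n
  simp only [norm_div, norm_pow, Real.norm_eq_abs, Real.norm_natCast]
  gcongr <;>
    first
      | exact abs_nonneg _
      | positivity
      | omega
      | exact_mod_cast Nat.factorial_le (Nat.le_add_right n j)

/-- auxiliary series `ψ_j(s) = Σ α^n s^(n+j+1)/(n+j+1)!`. -/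
noncomputable def psi (α : ℝ) (j : ℕ) (s : ℝ) : ℝ :=
  ∑' n : ℕ, α ^ n * s ^ (n + j + 1) / (Nat.factorial (n + j + 1))

lemma psi_eq (α : ℝ) (j : ℕ) (s : ℝ) : psi α j s = s ^ (j + 1) * phi (j + 1) (α * s) := by
  rw [phi, psi, ← tsum_mul_left]
  congr 1 with n
  rw [mul_pow, mul_div_assoc]
  ring_nf

lemma summable_psi (α : ℝ) (j : ℕ) (s : ℝ) :
    Summable (fun n : ℕ => α ^ n * s ^ (n + j + 1) / (Nat.factorial (n + j + 1))) := by
  have := ((summable_phi (j + 1) (α * s)).mul_left (s ^ (j + 1)))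
  apply this.congr
  intro n
  rw [mul_pow, mul_div_assoc]
  ring_nf

lemma psi_zero (α : ℝ) (j : ℕ) : psi α j 0 = 0 := by
  rw [psi]
  convert tsum_zero with n
  simp [zero_pow (Nat.succ_ne_zero (n + j))]

lemma hasDerivAt_psi (α : ℝ) (j : ℕ) (s : ℝ) :
    HasDerivAt (psi α j) (α * psi α j s + s ^ j / (Nat.factorial j)) s := by
  set R : ℝ := |s| + 1 with hR
  have hsR : s ∈ Ioo (-R) R := by constructor <;> cases abs_cases s <;> simp_all <;> linarith
  have key : HasDerivAt (psi α j)
      (∑' n : ℕ, α ^ n * s ^ (n + j) / (Nat.factorial (n + j))) s := by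
    apply hasDerivAt_tsum_of_isPreconnected (t := Ioo (-R) R)
      (u := fun n : ℕ => (|α| * R) ^ n / (Nat.factorial n) * R ^ j)
      (g := fun (n : ℕ) (x : ℝ) => α ^ n * x ^ (n + j + 1) / (Nat.factorial (n + j + 1)))
      (g' := fun (n : ℕ) (x : ℝ) => α ^ n * x ^ (n + j) / (Nat.factorial (n + j)))
      (y₀ := s)
    · exact (Real.summable_pow_div_factorial (|α| * R)).mul_right (R ^ j)
    · exact isOpen_Ioo
    · exact (convex_Ioo _ _).isPreconnected
    · intro n x _
      have h1 : HasDerivAt (fun x : ℝ => x ^ (n + j + 1))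
          ((n + j + 1 : ℕ) * x ^ (n + j)) x := by
        simpa using hasDerivAt_pow (n + j + 1) x
      have h2 := (h1.const_mul (α ^ n)).div_const ((Nat.factorial (n + j + 1) : ℝ))
      refine h2.congr_deriv ?_
      rw [Nat.factorial_succ]
      have : ((n + j + 1 : ℕ) : ℝ) ≠ 0 := by positivity
      field_simp
      push_cast
      ring
    · intro n x hx
      have hxR : |x| ≤ R := by
        rw [abs_le]; exact ⟨hx.1.le, hx.2.le⟩
      have hR0 : (0:ℝ) ≤ R := by positivity
      rw [Real.norm_eq_abs, abs_div, abs_mul, abs_pow, abs_pow, Nat.abs_cast]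
      calc |α| ^ n * |x| ^ (n + j) / (Nat.factorial (n + j))
          ≤ |α| ^ n * R ^ (n + j) / (Nat.factorial n) := by
            gcongr <;>
              first
                | exact abs_nonneg _
                | exact hxR
                | positivity
                | omega
                | exact_mod_cast Nat.factorial_le (Nat.le_add_right n j)
        _ = (|α| * R) ^ n / (Nat.factorial n) * R ^ j := by
            rw [pow_add, mul_pow]; ring
    · exact hsR
    · exact summable_psi α j s
    · exact hsR
  have hsum : Summable (fun n : ℕ => α ^ n * s ^ (n + j) / (Nat.factorial (n + j))) := by
    apply Summable.of_norm_bounded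
      ((Real.summable_pow_div_factorial (|α| * |s|)).mul_right (|s| ^ j))
    intro n
    rw [Real.norm_eq_abs, abs_div, abs_mul, abs_pow, abs_pow, Nat.abs_cast]
    calc |α| ^ n * |s| ^ (n + j) / (Nat.factorial (n + j))
        ≤ |α| ^ n * |s| ^ (n + j) / (Nat.factorial n) := by
          gcongr <;>
            first
              | exact abs_nonneg _
              | positivity
              | omega
              | exact_mod_cast Nat.factorial_le (Nat.le_add_right n j)
      _ = (|α| * |s|) ^ n / (Nat.factorial n) * |s| ^ j := by
          rw [pow_add, mul_pow]; ring
  have heq : (∑' n : ℕ, α ^ n * s ^ (n + j) / (Nat.factorial (n + j)))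
      = α * psi α j s + s ^ j / (Nat.factorial j) := by
    rw [Summable.tsum_eq_zero_add hsum]
    simp only [pow_zero, one_mul, zero_add]
    rw [add_comm, psi, ← tsum_mul_left]
    congr 1
    apply tsum_congr
    intro n
    rw [show n + 1 + j = n + j + 1 by omega, ← mul_div_assoc, pow_succ]
    ring
  rw [← heq]
  exact key

/-- The exponential Adams–Bashforth one-step update is exact when the nonlinear
remainder is the polynomial `c̃(t) = Σ_{j<k} (γ_j/j!) ((t-t_n)/h)^j`. -/
theorem EAB_update_exact (α h tn : ℝ) (hh : 0 < h) (k : ℕ) (hk : 1 ≤ k)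
    (γ : ℕ → ℝ) (y : ℝ → ℝ)
    (hy : ∀ t ∈ Set.Icc tn (tn + h),
      HasDerivWithinAt y
        (α * y t + ∑ j ∈ Finset.range k,
          (γ j / (Nat.factorial j : ℝ)) * ((t - tn) / h) ^ j)
        (Set.Icc tn (tn + h)) t) :
    y (tn + h) =
      Real.exp (α * h) * y tn +
        h * ∑ j ∈ Finset.range k, γ j * phi (j + 1) (α * h) := by
  have hne : h ≠ 0 := ne_of_gt hh
  set I := Set.Icc tn (tn + h) with hI
  set u : ℝ → ℝ := fun t => y t - ∑ j ∈ Finset.range k, (γ j / h ^ j) * psi α j (t - tn)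
    with hu
  set g : ℝ → ℝ := fun t => Real.exp (-(α * (t - tn))) * u t with hg
  -- derivative of g is 0 within I
  have hgd : ∀ t ∈ I, HasDerivWithinAt g 0 I t := by
    intro t ht
    have hud : HasDerivWithinAt u (α * u t) I t := by
      have hpsi : ∀ j ∈ Finset.range k, HasDerivWithinAt
          (fun t => (γ j / h ^ j) * psi α j (t - tn))
          ((γ j / h ^ j) * (α * psi α j (t - tn) + (t - tn) ^ j / (Nat.factorial j))) I t := by
        intro j _
        have h1 : HasDerivAt (fun t : ℝ => psi α j (t - tn))
            ((α * psi α j (t - tn) + (t - tn) ^ j / (Nat.factorial j)) * 1) t :=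
          (hasDerivAt_psi α j (t - tn)).comp t (h₂ := psi α j) ((hasDerivAt_id t).sub_const tn)
        exact ((h1.const_mul _).hasDerivWithinAt).congr_deriv (by ring)
      have hthis := (hy t ht).fun_sub (HasDerivWithinAt.fun_sum hpsi)
      apply hthis.congr_deriv
      have h3 : ∑ j ∈ Finset.range k, γ j / (Nat.factorial j : ℝ) * ((t - tn) / h) ^ j
          = ∑ j ∈ Finset.range k, γ j / h ^ j * ((t - tn) ^ j / (Nat.factorial j : ℝ)) := by
        refine Finset.sum_congr rfl fun j _ => ?_
        rw [div_pow]; ring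
      have h2 : ∑ j ∈ Finset.range k, γ j / h ^ j * (α * psi α j (t - tn))
          = α * ∑ j ∈ Finset.range k, γ j / h ^ j * psi α j (t - tn) := by
        rw [Finset.mul_sum]
        exact Finset.sum_congr rfl fun j _ => by ring
      rw [hu, h3, mul_sub, ← h2]
      simp only [mul_add, Finset.sum_add_distrib]
      ring
    have hed : HasDerivAt (fun t : ℝ => Real.exp (-(α * (t - tn))))
        (Real.exp (-(α * (t - tn))) * (-α)) t := by
      have h4 : HasDerivAt (fun t : ℝ => -(α * (t - tn))) (-α) t := by
        simpa using (((hasDerivAt_id t).sub_const tn).const_mul α).fun_neg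
      simpa [mul_comm] using h4.exp
    have := (hed.hasDerivWithinAt).mul hud
    apply this.congr_deriv
    ring
  have hgc : ContinuousOn g I := fun x hx => (hgd x hx).continuousWithinAt
  have hconst := constant_of_has_deriv_right_zero hgc (fun x hx =>
    (hgd x (Set.mem_Icc_of_Ico hx)).mono_of_mem_nhdsWithin (Icc_mem_nhdsGE_of_mem hx))
    (tn + h) (by constructor <;> linarith)
  -- evaluate g at the endpoints
  have hgtn : g tn = y tn := by
    simp [hg, hu, psi_zero]
  have hgth : g (tn + h) = Real.exp (-(α * h)) *
      (y (tn + h) - h * ∑ j ∈ Finset.range k, γ j * phi (j + 1) (α * h)) := by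
    rw [hg, hu]
    simp only [add_sub_cancel_left]
    congr 2
    rw [Finset.mul_sum]
    apply Finset.sum_congr rfl
    intro j _
    rw [psi_eq]
    field_simp
    ring
  rw [hgth, hgtn] at hconst
  have hexp : Real.exp (α * h) * Real.exp (-(α * h)) = 1 := by
    rw [← Real.exp_add]; simp
  have h5 := congrArg (fun x => Real.exp (α * h) * x) hconst
  simp only [← mul_assoc, hexp, one_mul] at h5
  linarith [h5]
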